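/- Let Σ = Fin 2 and n = 2m+1 odd, and let the group G = S_2 × ⟨r⟩ (of order 4, isomorphic to the Klein four-group) act on local rules f : (Fin n → Σ) → Σ by (α, ρ) · f = (w ↦ α (f (α⁻¹ ∘ ρ(w)))) where ρ is either the identity or word-reversal. Then the total number of G-orbits on the set of local rules equals (2·2^(2^(2m)) + 2^(2^m (2^m+1)) + 2^(2^(2m+1))) / 4. -/

import Mathlib

set_option synthInstance.maxHeartbeats 1000000
set_option maxHeartbeats 1000000

/-- The Klein four-group of symmetries `S_2 × ⟨r⟩`. -/
abbrev KleinGrp := Equiv.Perm (Fin 2) × Multiplicative (ZMod 2)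

/-- Action of a symmetry on a local rule: `(α, ρ) · f = w ↦ α (f (α⁻¹ ∘ ρ(w)))`,
where `ρ(w)` reverses the word iff the reflection component is nontrivial. -/
def ract {n : ℕ} (g : KleinGrp) (f : (Fin n → Fin 2) → Fin 2) :
    (Fin n → Fin 2) → Fin 2 :=
  fun w => g.1 (f (fun i => g.1⁻¹ (w (if Multiplicative.toAdd g.2 = 0 then i else i.rev))))

lemma zmod2_cases (a : ZMod 2) : a = 0 ∨ a = 1 := by revert a; decide

lemma rev_key {n : ℕ} (a b : ZMod 2) (j : Fin n) :
    (if a + b = 0 then j else j.rev) =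
      (if a = 0 then (if b = 0 then j else j.rev) else (if b = 0 then j else j.rev).rev) := by
  rcases zmod2_cases a with ha | ha <;> rcases zmod2_cases b with hb | hb <;>
    subst ha <;> subst hb <;>
    simp [Fin.rev_rev, show ((1:ZMod 2)+1) = 0 from by decide,
      show (1:ZMod 2) ≠ 0 from by decide, show ((0:ZMod 2)+1) ≠ 0 from by decide,
      show ((1:ZMod 2)+0) ≠ 0 from by decide]

lemma ract_one {n : ℕ} (f : (Fin n → Fin 2) → Fin 2) : ract 1 f = f := by
  funext w; simp [ract]

lemma ract_mul {n : ℕ} (g h : KleinGrp) (f : (Fin n → Fin 2) → Fin 2) :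
    ract (g * h) f = ract g (ract h f) := by
  funext w
  simp only [ract, Prod.fst_mul, Prod.snd_mul, mul_inv_rev, Equiv.Perm.mul_apply, toAdd_mul,
    rev_key]

instance (priority := 5000) ractAction (n : ℕ) :
    MulAction KleinGrp ((Fin n → Fin 2) → Fin 2) where
  smul := ract
  one_smul := ract_one
  mul_smul := ract_mul

lemma ract_smul {n : ℕ} (g : KleinGrp) (f : (Fin n → Fin 2) → Fin 2) : g • f = ract g f := rfl

section counting
variable {X Y : Type*} [Fintype X] [DecidableEq X] [Fintype Y] [DecidableEq Y]
  (T : X → X) (hT : Function.Involutive T) (σ : Y → Y) (hσ : Function.Involutive σ)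

noncomputable def equivEquiv (e : X ≃ Fin (Fintype.card X)) :
    {f : X → Y // ∀ x, f (T x) = σ (f x)} ≃
      ({x // T x = x} → {y // σ y = y}) × ({x : X // e (T x) < e x} → Y) where
  toFun f := (fun x => ⟨f.1 x.1, by have h := f.2 x.1; rw [x.2] at h; exact h.symm⟩,
    fun x => f.1 x.1)
  invFun p := ⟨fun x =>
      if hx : T x = x then (p.1 ⟨x, hx⟩).1
      else if hlt : e (T x) < e x then p.2 ⟨x, hlt⟩
      else σ (p.2 ⟨T x, (by
        rw [hT x]
        exact lt_of_le_of_ne (not_lt.mp hlt) (fun h => hx (e.injective h).symm) :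
          e (T (T x)) < e (T x))⟩), by
    intro x
    by_cases hx : T x = x
    · rw [hx]
      simp only [dif_pos hx]
      exact ((p.1 ⟨x, hx⟩).2).symm
    · have hx' : T (T x) ≠ T x := fun h => hx (((hT x).symm.trans h).symm)
      by_cases hlt : e (T x) < e x
      · have h2 : ¬ e (T (T x)) < e (T x) := by rw [hT x]; exact not_lt.mpr hlt.le
        simp only [dif_neg hx, dif_pos hlt, dif_neg hx', dif_neg h2]
        exact congrArg σ (congrArg p.2 (Subtype.ext (hT x)))
      · have h2 : e (T (T x)) < e (T x) := by
          rw [hT x]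
          exact lt_of_le_of_ne (not_lt.mp hlt) (fun h => hx (e.injective h).symm)
        simp only [dif_neg hx, dif_neg hlt, dif_pos h2, dif_neg hx']
        exact (hσ _).symm⟩
  left_inv f := by
    ext x
    by_cases hx : T x = x
    · simp only [dif_pos hx]
    · by_cases hlt : e (T x) < e x
      · simp only [dif_neg hx, dif_pos hlt]
      · simp only [dif_neg hx, dif_neg hlt]
        rw [f.2 x]
        exact hσ _
  right_inv p := by
    refine Prod.ext (funext fun x => ?_) (funext fun x => ?_)
    · exact Subtype.ext (by simp only [dif_pos x.2])
    · have hx : T x.1 ≠ x.1 := fun h => absurd x.2 (by rw [h]; exact lt_irrefl _)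
      simp only [dif_neg hx, dif_pos x.2]

include hT in
lemma card_S (e : X ≃ Fin (Fintype.card X)) :
    Fintype.card {x : X // e (T x) < e x} =
      (Fintype.card X - Fintype.card {x // T x = x}) / 2 := by
  classical
  have hBC : Fintype.card {x : X // e (T x) < e x} = Fintype.card {x : X // e x < e (T x)} := by
    refine Fintype.card_congr ⟨fun x => ⟨T x.1, by rw [hT x.1]; exact x.2⟩,
      fun x => ⟨T x.1, by rw [hT x.1]; exact x.2⟩, fun x => Subtype.ext (hT x.1),
      fun x => Subtype.ext (hT x.1)⟩
  have hsplit : Fintype.card X = Fintype.card {x // T x = x} +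
      (Fintype.card {x : X // e (T x) < e x} + Fintype.card {x : X // e x < e (T x)}) := by
    rw [Fintype.card_subtype, Fintype.card_subtype, Fintype.card_subtype]
    rw [← Finset.card_union_of_disjoint (by
      simp only [Finset.disjoint_filter]
      intro x _ h1 h2
      exact asymm h2 h1)]
    rw [← Finset.filter_or]
    have h1 := Finset.card_filter_add_card_filter_not (s := Finset.univ)
      (p := fun x : X => T x = x)
    have h2 : Finset.filter (fun x : X => ¬ T x = x) Finset.univ
        = Finset.filter (fun x : X => e (T x) < e x ∨ e x < e (T x)) Finset.univ := by
      apply Finset.filter_congr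
      intro x _
      constructor
      · intro h
        rcases lt_or_gt_of_ne (fun he : e (T x) = e x => h (e.injective he)) with h' | h'
        · exact Or.inl h'
        · exact Or.inr h'
      · rintro (h | h) he <;> rw [he] at h <;> exact lt_irrefl _ h
    rw [h2] at h1
    have h3 : (Finset.univ : Finset X).card = Fintype.card X := Finset.card_univ
    omega
  omega

include hT hσ in
lemma card_equivariant :
    Nat.card {f : X → Y // ∀ x, f (T x) = σ (f x)} =
      Fintype.card {y // σ y = y} ^ Fintype.card {x // T x = x} *
        Fintype.card Y ^ ((Fintype.card X - Fintype.card {x // T x = x}) / 2) := by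
  classical
  let e := Fintype.equivFin X
  rw [Nat.card_congr (equivEquiv T hT σ hσ e)]
  simp only [Nat.card_eq_fintype_card, Fintype.card_prod, Fintype.card_fun, card_S T hT e]

include hT hσ in
lemma card_equivariant' :
    Nat.card {f : X → Y // ∀ x, f (T x) = σ (f x)} =
      Nat.card {y // σ y = y} ^ Nat.card {x // T x = x} *
        Nat.card Y ^ ((Nat.card X - Nat.card {x // T x = x}) / 2) := by
  classical
  rw [card_equivariant T hT σ hσ]
  simp only [Nat.card_eq_fintype_card]
end counting

lemma pal_card (m : ℕ) :
    Fintype.card {w : Fin (2*m+1) → Fin 2 // (fun i => w i.rev) = w} = 2 ^ (m+1) := by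
  have e : {w : Fin (2*m+1) → Fin 2 // (fun i => w i.rev) = w} ≃ (Fin (m+1) → Fin 2) :=
    { toFun := fun w j => w.1 ⟨j.1, by omega⟩
      invFun := fun g => ⟨fun i => g ⟨min i.1 (2*m - i.1), by omega⟩, by
        funext i
        have hi : i.rev.1 = 2*m - i.1 := by
          rw [Fin.val_rev]; omega
        exact congrArg g (Fin.ext (by
          simp only [Fin.val_fin_lt, Fin.isValue]
          rw [show (i.rev : ℕ) = 2*m - i.1 from hi]; omega))⟩
      left_inv := fun w => by
        apply Subtype.ext
        funext i
        show w.1 ⟨min i.1 (2*m - i.1), _⟩ = w.1 i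
        rcases le_total i.1 (2*m - i.1) with h | h
        · exact congrArg w.1 (Fin.ext (by simp only; omega))
        · have hrev : (⟨min i.1 (2*m - i.1), by omega⟩ : Fin (2*m+1)) = i.rev := by
            apply Fin.ext
            rw [Fin.val_rev]
            show min i.1 (2*m - i.1) = 2*m+1 - (i.1 + 1)
            omega
          rw [hrev]
          exact congrFun w.2 i
      right_inv := fun g => by
        funext j
        show g ⟨min j.1 (2*m - j.1), _⟩ = g j
        exact congrArg g (Fin.ext (by simp only; omega)) }
  rw [Fintype.card_congr e, Fintype.card_fun, Fintype.card_fin, Fintype.card_fin]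

lemma exp_arith1 (m : ℕ) : 2^(m+1) + (2^(2*m+1) - 2^(m+1))/2 = 2^m*(2^m+1) := by
  have e1 : 2 ^ (m+1) = 2^m * 2 := pow_succ 2 m
  have e2 : 2 ^ (2*m) = 2^m * 2^m := by rw [two_mul, pow_add]
  have e3 : 2 ^ (2*m+1) = 2^(2*m) * 2 := pow_succ 2 (2*m)
  have e4 : 2^m*(2^m+1) = 2^m*2^m + 2^m := by ring
  have e6 : 2^m * 2^m ≥ 2^m := Nat.le_mul_of_pos_left _ (by positivity)
  omega

lemma exp_arith2 (m : ℕ) : (2^(2*m+1) - 0)/2 = 2^(2*m) := by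
  have e3 : 2 ^ (2*m+1) = 2^(2*m) * 2 := pow_succ 2 (2*m)
  omega

lemma natCard_words (m : ℕ) : Nat.card (Fin (2*m+1) → Fin 2) = 2 ^ (2*m+1) := by
  simp [Nat.card_eq_fintype_card]

/-- Fixed points of the identity. -/
lemma cardFix_one (m : ℕ) :
    Nat.card (MulAction.fixedBy ((Fin (2*m+1) → Fin 2) → Fin 2) (1 : KleinGrp)) =
      2 ^ 2 ^ (2*m+1) := by
  classical
  have h : MulAction.fixedBy ((Fin (2*m+1) → Fin 2) → Fin 2) (1 : KleinGrp) = Set.univ := by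
    ext f
    simp [MulAction.mem_fixedBy]
  rw [h]
  rw [Nat.card_congr (Equiv.Set.univ _)]
  simp [Nat.card_eq_fintype_card, Fintype.card_fun]

/-- Fixed points of pure reflection. -/
lemma cardFix_rev (m : ℕ) :
    Nat.card (MulAction.fixedBy ((Fin (2*m+1) → Fin 2) → Fin 2)
        ((1, Multiplicative.ofAdd 1) : KleinGrp)) = 2 ^ (2^m * (2^m + 1)) := by
  classical
  set g : KleinGrp := (1, Multiplicative.ofAdd 1) with hg
  set T : (Fin (2*m+1) → Fin 2) → (Fin (2*m+1) → Fin 2) := fun w => (fun i => w i.rev) with hTdef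
  have hract : ∀ f : (Fin (2*m+1) → Fin 2) → Fin 2, ract g f = fun w => f (T w) := by
    intro f
    funext w
    simp [ract, hg, hTdef, show Multiplicative.toAdd ((Multiplicative.ofAdd 1) :
      Multiplicative (ZMod 2)) ≠ 0 from by decide]
  have hmem : ∀ f : (Fin (2*m+1) → Fin 2) → Fin 2,
      f ∈ MulAction.fixedBy ((Fin (2*m+1) → Fin 2) → Fin 2) g ↔
        ∀ w, f (T w) = id (f w) := by
    intro f
    rw [MulAction.mem_fixedBy, ract_smul, hract f]
    constructor
    · intro h w
      exact congrFun h w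
    · intro h
      funext w
      exact h w
  have hT : Function.Involutive T := by
    intro w
    funext i
    simp [hTdef, Fin.rev_rev]
  have hstep : Nat.card (MulAction.fixedBy ((Fin (2*m+1) → Fin 2) → Fin 2) g) =
      Nat.card {f : (Fin (2*m+1) → Fin 2) → Fin 2 // ∀ w, f (T w) = id (f w)} :=
    Nat.card_congr (Equiv.subtypeEquivRight hmem)
  rw [hstep, card_equivariant' T hT id (fun y => rfl : Function.Involutive (id : Fin 2 → Fin 2))]
  have h1 : Nat.card {y : Fin 2 // id y = y} = 2 := by
    rw [Nat.card_eq_fintype_card]; decide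
  have h2 : Nat.card {w : Fin (2*m+1) → Fin 2 // T w = w} = 2 ^ (m+1) := by
    rw [Nat.card_eq_fintype_card]
    exact pal_card m
  rw [h1, h2, natCard_words, Nat.card_eq_fintype_card, Fintype.card_fin]
  rw [← pow_add, exp_arith1 m]

/-- Helper for the two fixed-point-free cases. -/
lemma cardFix_free (m : ℕ) (g : KleinGrp) (T : (Fin (2*m+1) → Fin 2) → (Fin (2*m+1) → Fin 2))
    (σ : Fin 2 → Fin 2) (hT : Function.Involutive T) (hσ : Function.Involutive σ)
    (hmem : ∀ f : (Fin (2*m+1) → Fin 2) → Fin 2,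
      f ∈ MulAction.fixedBy ((Fin (2*m+1) → Fin 2) → Fin 2) g ↔ ∀ w, f (T w) = σ (f w))
    (hfree : ∀ w, T w ≠ w) :
    Nat.card (MulAction.fixedBy ((Fin (2*m+1) → Fin 2) → Fin 2) g) = 2 ^ 2 ^ (2*m) := by
  classical
  have hstep : Nat.card (MulAction.fixedBy ((Fin (2*m+1) → Fin 2) → Fin 2) g) =
      Nat.card {f : (Fin (2*m+1) → Fin 2) → Fin 2 // ∀ w, f (T w) = σ (f w)} :=
    Nat.card_congr (Equiv.subtypeEquivRight hmem)
  rw [hstep, card_equivariant' T hT σ hσ]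
  haveI : IsEmpty {w : Fin (2*m+1) → Fin 2 // T w = w} := ⟨fun w => hfree w.1 w.2⟩
  have h0 : Nat.card {w : Fin (2*m+1) → Fin 2 // T w = w} = 0 := Nat.card_of_isEmpty
  rw [h0, natCard_words]
  simp only [pow_zero, one_mul, Nat.card_eq_fintype_card, Fintype.card_fin]
  rw [exp_arith2 m]

lemma cardFix_swap (m : ℕ) :
    Nat.card (MulAction.fixedBy ((Fin (2*m+1) → Fin 2) → Fin 2)
        ((Equiv.swap 0 1, 1) : KleinGrp)) = 2 ^ 2 ^ (2*m) := by
  classical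
  set c : Equiv.Perm (Fin 2) := Equiv.swap 0 1 with hc
  refine cardFix_free m (c, 1) (fun w => (fun i => c⁻¹ (w i))) (⇑c⁻¹) ?_ ?_ ?_ ?_
  · intro w
    funext i
    exact (show ∀ y : Fin 2, c⁻¹ (c⁻¹ y) = y from by decide) (w i)
  · intro y
    exact (show ∀ y : Fin 2, c⁻¹ (c⁻¹ y) = y from by decide) y
  · intro f
    rw [MulAction.mem_fixedBy, ract_smul]
    have hract : ract ((c, 1) : KleinGrp) f = fun w => c (f (fun i => c⁻¹ (w i))) := by
      funext w
      simp [ract, show Multiplicative.toAdd ((1 : Multiplicative (ZMod 2))) = 0 from rfl]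
    rw [hract]
    constructor
    · intro h w
      have := congrFun h w
      rw [← this]
      exact ((show ∀ y : Fin 2, c⁻¹ (c y) = y from by decide) _).symm
    · intro h
      funext w
      have := h w
      rw [this]
      exact (show ∀ y : Fin 2, c (c⁻¹ y) = y from by decide) _
  · intro w hw
    have := congrFun hw 0
    revert this
    exact (show ∀ y : Fin 2, ¬ c⁻¹ y = y from by decide) (w 0)

lemma cardFix_swaprev (m : ℕ) :
    Nat.card (MulAction.fixedBy ((Fin (2*m+1) → Fin 2) → Fin 2)
        ((Equiv.swap 0 1, Multiplicative.ofAdd 1) : KleinGrp)) = 2 ^ 2 ^ (2*m) := by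
  classical
  set c : Equiv.Perm (Fin 2) := Equiv.swap 0 1 with hc
  refine cardFix_free m (c, Multiplicative.ofAdd 1) (fun w => (fun i => c⁻¹ (w i.rev)))
    (⇑c⁻¹) ?_ ?_ ?_ ?_
  · intro w
    funext i
    show c⁻¹ (c⁻¹ (w i.rev.rev)) = w i
    rw [Fin.rev_rev]
    exact (show ∀ y : Fin 2, c⁻¹ (c⁻¹ y) = y from by decide) (w i)
  · intro y
    exact (show ∀ y : Fin 2, c⁻¹ (c⁻¹ y) = y from by decide) y
  · intro f
    rw [MulAction.mem_fixedBy, ract_smul]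
    have hract : ract ((c, Multiplicative.ofAdd 1) : KleinGrp) f =
        fun w => c (f (fun i => c⁻¹ (w i.rev))) := by
      funext w
      simp [ract, show Multiplicative.toAdd ((Multiplicative.ofAdd 1) :
        Multiplicative (ZMod 2)) ≠ 0 from by decide]
    rw [hract]
    constructor
    · intro h w
      have := congrFun h w
      rw [← this]
      exact ((show ∀ y : Fin 2, c⁻¹ (c y) = y from by decide) _).symm
    · intro h
      funext w
      have := h w
      rw [this]
      exact (show ∀ y : Fin 2, c (c⁻¹ y) = y from by decide) _
  · intro w hw
    have hmid : (⟨m, by omega⟩ : Fin (2*m+1)).rev = ⟨m, by omega⟩ := by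
      apply Fin.ext
      rw [Fin.val_rev]
      show 2*m+1 - (m+1) = m
      omega
    have := congrFun hw ⟨m, by omega⟩
    simp only [hmid] at this
    revert this
    exact (show ∀ y : Fin 2, ¬ c⁻¹ y = y from by decide) (w ⟨m, by omega⟩)

theorem count_orbits_two_states_odd (m : ℕ) :
    Nat.card {s : Set ((Fin (2 * m + 1) → Fin 2) → Fin 2) //
        ∃ f, s = {g | ∃ α : KleinGrp, g = ract α f}} =
      (2 * 2 ^ 2 ^ (2 * m) + 2 ^ (2 ^ m * (2 ^ m + 1)) + 2 ^ 2 ^ (2 * m + 1)) / 4 := by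
  classical
  have horb : ∀ f : (Fin (2*m+1) → Fin 2) → Fin 2,
      {g | ∃ α : KleinGrp, g = ract α f} = MulAction.orbit KleinGrp f := by
    intro f
    ext g
    constructor
    · rintro ⟨α, rfl⟩
      exact ⟨α, rfl⟩
    · rintro ⟨α, rfl⟩
      exact ⟨α, rfl⟩
  -- the orbit space
  have hqcard : Nat.card {s : Set ((Fin (2 * m + 1) → Fin 2) → Fin 2) //
      ∃ f, s = {g | ∃ α : KleinGrp, g = ract α f}} =
      Nat.card (Quotient (MulAction.orbitRel KleinGrp ((Fin (2*m+1) → Fin 2) → Fin 2))) := by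
    symm
    apply Nat.card_congr
    refine Equiv.ofBijective
      (Quotient.lift (fun f => (⟨{g | ∃ α : KleinGrp, g = ract α f}, f, rfl⟩ :
          {s : Set ((Fin (2 * m + 1) → Fin 2) → Fin 2) //
            ∃ f, s = {g | ∃ α : KleinGrp, g = ract α f}}))
        (fun f1 f2 h => Subtype.ext (by
          simp only
          rw [horb f1, horb f2]
          exact MulAction.orbit_eq_iff.mpr h))) ⟨?_, ?_⟩
    · intro x y
      refine Quotient.inductionOn₂ x y (fun f1 f2 h => ?_)
      apply Quotient.sound
      have hval : ({g | ∃ α : KleinGrp, g = ract α f1} : Set ((Fin (2*m+1) → Fin 2) → Fin 2)) =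
          {g | ∃ α : KleinGrp, g = ract α f2} := congrArg Subtype.val h
      rw [horb f1, horb f2] at hval
      exact MulAction.orbit_eq_iff.mp hval
    · rintro ⟨s, f, rfl⟩
      exact ⟨Quotient.mk _ f, rfl⟩
  rw [hqcard]
  -- Burnside
  haveI : ∀ a : KleinGrp, Fintype
      (MulAction.fixedBy ((Fin (2*m+1) → Fin 2) → Fin 2) a) := fun a => Fintype.ofFinite _
  haveI : Fintype (Quotient (MulAction.orbitRel KleinGrp
    ((Fin (2*m+1) → Fin 2) → Fin 2))) := Fintype.ofFinite _
  have burn := MulAction.sum_card_fixedBy_eq_card_orbits_mul_card_group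
    (G := KleinGrp) (X := (Fin (2*m+1) → Fin 2) → Fin 2)
  have hcardG : Fintype.card KleinGrp = 4 := by decide
  rw [hcardG] at burn
  have huniv : (Finset.univ : Finset KleinGrp) =
      {(1, 1), (1, Multiplicative.ofAdd 1), (Equiv.swap 0 1, 1),
       (Equiv.swap 0 1, Multiplicative.ofAdd 1)} := by decide
  rw [huniv] at burn
  rw [Finset.sum_insert (by decide), Finset.sum_insert (by decide),
    Finset.sum_insert (by decide), Finset.sum_singleton] at burn
  simp only [← Nat.card_eq_fintype_card] at burn
  have k1 : ((1, 1) : KleinGrp) = 1 := rfl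
  rw [k1, cardFix_one m, cardFix_rev m, cardFix_swap m, cardFix_swaprev m] at burn
  -- burn : 2^2^(2m+1) + (2^(2^m*(2^m+1)) + (2^2^(2m) + 2^2^(2m))) = Nat.card Ω * 4
  omega
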